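/- Let f : ℤ² → {contact elements} be a discrete Legendre map such that for every n ∈ ℤ the subspace Σₙ := span{s⁻(m,n) : m ∈ ℤ} is 3-dimensional. Then f is a discrete channel surface with circular direction '+' if and only if (a) s⁺(m,n) = s⁺(m',n) for all m, m', n ∈ ℤ (the horizontal curvature spheres are constant along each '+'-coordinate line), and (b) for every n ∈ ℤ the bilinear form restricted to Σₙ is nondegenerate of signature (2,1), i.e., the vertical curvature spheres along each '+'-coordinate ribbon determine a (2,1)-plane. -/

import Mathlib

noncomputable section

/-- The Lie sphere geometric model: `ℝ^{4,2}`. -/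
abbrev V6 : Type := Fin 6 → ℝ

/-- The symmetric bilinear form of signature `(4,2)` on `V6`. -/
def B (x y : V6) : ℝ :=
  x 0 * y 0 + x 1 * y 1 + x 2 * y 2 + x 3 * y 3 - x 4 * y 4 - x 5 * y 5

/-- An oriented sphere: a 1-dimensional isotropic subspace. -/
def IsSphere (S : Submodule ℝ V6) : Prop :=
  Module.finrank ℝ S = 1 ∧ ∀ x ∈ S, B x x = 0

/-- A contact element: a 2-dimensional totally isotropic subspace. -/
def IsContact (W : Submodule ℝ V6) : Prop :=
  Module.finrank ℝ W = 2 ∧ ∀ x ∈ W, ∀ y ∈ W, B x y = 0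

/-- A `(2,1)`-plane: 3-dim subspace on which the form is nondegenerate of signature `(2,1)`. -/
def IsSig21 (D : Submodule ℝ V6) : Prop :=
  ∃ u v w : V6, D = Submodule.span ℝ {u, v, w} ∧
    B u u = 1 ∧ B v v = 1 ∧ B w w = -1 ∧ B u v = 0 ∧ B u w = 0 ∧ B v w = 0

/-- A Dupin cyclide: a pair of `(2,1)`-planes, the second the orthogonal complement of the first. -/
def IsDupin (D E : Submodule ℝ V6) : Prop :=
  IsSig21 D ∧ IsSig21 E ∧ ∀ x : V6, x ∈ E ↔ ∀ y ∈ D, B x y = 0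

/-- Horizontal curvature sphere on the edge from `(m,n)` to `(m+1,n)`. -/
def sPlus (f : ℤ × ℤ → Submodule ℝ V6) (m n : ℤ) : Submodule ℝ V6 :=
  f (m, n) ⊓ f (m + 1, n)

/-- Vertical curvature sphere on the edge from `(m,n)` to `(m,n+1)`. -/
def sMinus (f : ℤ × ℤ → Submodule ℝ V6) (m n : ℤ) : Submodule ℝ V6 :=
  f (m, n) ⊓ f (m, n + 1)

/-- A discrete Legendre map. -/
def IsLegendre (f : ℤ × ℤ → Submodule ℝ V6) : Prop :=
  (∀ p : ℤ × ℤ, IsContact (f p)) ∧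
  (∀ m n : ℤ, Module.finrank ℝ (sPlus f m n) = 1) ∧
  (∀ m n : ℤ, Module.finrank ℝ (sMinus f m n) = 1)

/-- A face-cyclide congruence for `f`. -/
def IsFaceCyclideCongruence (f D E : ℤ × ℤ → Submodule ℝ V6) : Prop :=
  ∀ m n : ℤ,
    IsDupin (D (m, n)) (E (m, n)) ∧
    sPlus f m n ≤ D (m, n) ∧ sPlus f m (n + 1) ≤ D (m, n) ∧
    sMinus f m n ≤ E (m, n) ∧ sMinus f (m + 1) n ≤ E (m, n)

/-- A discrete channel surface with circular direction `+`. -/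
def IsChannelPlus (f : ℤ × ℤ → Submodule ℝ V6) : Prop :=
  IsLegendre f ∧
  ∃ D E : ℤ × ℤ → Submodule ℝ V6,
    IsFaceCyclideCongruence f D E ∧
    ∀ m m' n : ℤ, D (m, n) = D (m', n) ∧ E (m, n) = E (m', n)

/-- The orthogonal complement of a point sphere complex `p`. -/
def pPerp (p : V6) : Submodule ℝ V6 where
  carrier := {x | B x p = 0}
  add_mem' := by
    intro a b ha hb
    simp only [Set.mem_setOf_eq, B, Pi.add_apply] at *
    linear_combination ha + hb
  zero_mem' := by simp [B]
  smul_mem' := by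
    intro c x hx
    simp only [Set.mem_setOf_eq, B, Pi.smul_apply, smul_eq_mul] at *
    linear_combination c * hx

section Aux
open Submodule Module

open Submodule Module

lemma B_comm (x y : V6) : B x y = B y x := by unfold B; ring

def Bf : LinearMap.BilinForm ℝ V6 :=
  LinearMap.mk₂ ℝ B
    (fun x y z => by unfold B; simp only [Pi.add_apply]; ring)
    (fun c x y => by unfold B; simp only [Pi.smul_apply, smul_eq_mul]; ring)
    (fun x y z => by unfold B; simp only [Pi.add_apply]; ring)
    (fun c x y => by unfold B; simp only [Pi.smul_apply, smul_eq_mul]; ring)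

@[simp] lemma Bf_apply (x y : V6) : Bf x y = B x y := rfl

lemma Bf_symm : Bf.IsSymm := ⟨fun x y => by simp [B_comm]⟩

lemma Bf_refl : Bf.IsRefl := Bf_symm.isRefl

lemma Bf_nondeg : Bf.Nondegenerate := by
  refine LinearMap.BilinForm.Nondegenerate.ofSeparatingLeft ?_
  intro x hx
  funext i
  fin_cases i
  · simpa [B, Pi.single_apply] using hx (Pi.single 0 1)
  · simpa [B, Pi.single_apply] using hx (Pi.single 1 1)
  · simpa [B, Pi.single_apply] using hx (Pi.single 2 1)
  · simpa [B, Pi.single_apply] using hx (Pi.single 3 1)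
  · simpa [B, Pi.single_apply] using hx (Pi.single 4 1)
  · simpa [B, Pi.single_apply] using hx (Pi.single 5 1)

def perpB (W : Submodule ℝ V6) : Submodule ℝ V6 := Bf.orthogonal W

lemma mem_perpB {W : Submodule ℝ V6} {x : V6} : x ∈ perpB W ↔ ∀ y ∈ W, B x y = 0 := by
  constructor
  · exact fun h y hy => (B_comm x y).trans (h y hy)
  · exact fun h y hy => (B_comm y x).trans (h y hy)

lemma finrank_V6 : finrank ℝ V6 = 6 := Module.finrank_fin_fun ℝ

lemma finrank_perpB (W : Submodule ℝ V6) :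
    finrank ℝ (perpB W) = 6 - finrank ℝ W := by
  rw [perpB, LinearMap.BilinForm.finrank_orthogonal Bf_nondeg, finrank_V6]

lemma perpB_perpB (W : Submodule ℝ V6) : perpB (perpB W) = W :=
  LinearMap.BilinForm.orthogonal_orthogonal Bf_nondeg Bf_refl W


-- expansions
lemma B_triple (a b c a' b' c' : ℝ) (u v w : V6) :
    B (a•u+b•v+c•w) (a'•u+b'•v+c'•w) =
      a*a'*B u u + b*b'*B v v + c*c'*B w w + (a*b'+b*a')*B u v + (a*c'+c*a')*B u w
        + (b*c'+c*b')*B v w := by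
  simp only [B, Pi.add_apply, Pi.smul_apply, smul_eq_mul]; ring

lemma B_triple_right (a b c : ℝ) (u v w z : V6) :
    B (a•u+b•v+c•w) z = a*B u z + b*B v z + c*B w z := by
  simp only [B, Pi.add_apply, Pi.smul_apply, smul_eq_mul]; ring

lemma mem_span_triple {u v w x : V6} :
    x ∈ Submodule.span ℝ ({u, v, w} : Set V6) ↔ ∃ a b c : ℝ, x = a•u + b•v + c•w := by
  constructor
  · intro h
    rw [show ({u,v,w} : Set V6) = insert u {v,w} from rfl, Submodule.mem_span_insert] at h
    obtain ⟨a, z, hz, rfl⟩ := h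
    rw [Submodule.mem_span_pair] at hz
    obtain ⟨b, c, rfl⟩ := hz
    exact ⟨a, b, c, by abel⟩
  · rintro ⟨a, b, c, rfl⟩
    refine add_mem (add_mem ?_ ?_) ?_ <;>
      exact smul_mem _ _ (subset_span (by simp))

lemma indep3 {u v w : V6} (huu : B u u ≠ 0) (hvv : B v v ≠ 0) (hww : B w w ≠ 0)
    (huv : B u v = 0) (huw : B u w = 0) (hvw : B v w = 0) :
    LinearIndependent ℝ ![u, v, w] := by
  apply LinearMap.BilinForm.linearIndependent_of_iIsOrtho (B := Bf)
  · intro i j hij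
    fin_cases i <;> fin_cases j <;>
      simp_all [Function.onFun, LinearMap.IsOrtho, B_comm u v, B_comm u w, B_comm v w]
  · intro i
    fin_cases i
    · simpa [LinearMap.BilinForm.isOrtho_def] using huu
    · simpa [LinearMap.BilinForm.isOrtho_def] using hvv
    · simpa [LinearMap.BilinForm.isOrtho_def] using hww

lemma span_triple_eq_range (u v w : V6) :
    ({u, v, w} : Set V6) = Set.range ![u, v, w] := by
  ext x
  simp only [Matrix.range_cons, Matrix.range_empty, Set.union_empty, Set.mem_union,
    Set.mem_insert_iff, Set.mem_singleton_iff]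

lemma finrank_span_triple {u v w : V6} (huu : B u u ≠ 0) (hvv : B v v ≠ 0) (hww : B w w ≠ 0)
    (huv : B u v = 0) (huw : B u w = 0) (hvw : B v w = 0) :
    finrank ℝ (span ℝ ({u,v,w} : Set V6)) = 3 := by
  rw [span_triple_eq_range, finrank_span_eq_card (indep3 huu hvv hww huv huw hvw)]
  simp


lemma sig21_finrank {S : Submodule ℝ V6} (h : IsSig21 S) : finrank ℝ S = 3 := by
  obtain ⟨u, v, w, rfl, huu, hvv, hww, huv, huw, hvw⟩ := h
  exact finrank_span_triple (by rw [huu]; norm_num) (by rw [hvv]; norm_num)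
    (by rw [hww]; norm_num) huv huw hvw

lemma span_eq_of_triple {D : Submodule ℝ V6} {u v w : V6}
    (hu : u ∈ D) (hv : v ∈ D) (hw : w ∈ D) (h3 : finrank ℝ D = 3)
    (huu : B u u ≠ 0) (hvv : B v v ≠ 0) (hww : B w w ≠ 0)
    (huv : B u v = 0) (huw : B u w = 0) (hvw : B v w = 0) :
    D = span ℝ ({u, v, w} : Set V6) := by
  refine (Submodule.eq_of_le_of_finrank_eq ?_ ?_).symm
  · rw [span_le]
    rintro x hx
    simp only [Set.mem_insert_iff, Set.mem_singleton_iff] at hx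
    rcases hx with rfl | rfl | rfl <;> assumption
  · rw [finrank_span_triple huu hvv hww huv huw hvw, h3]

lemma isSig21_of_triple {D : Submodule ℝ V6} {u v w : V6}
    (hu : u ∈ D) (hv : v ∈ D) (hw : w ∈ D) (h3 : finrank ℝ D = 3)
    (huu : B u u = 1) (hvv : B v v = 1) (hww : B w w = -1)
    (huv : B u v = 0) (huw : B u w = 0) (hvw : B v w = 0) : IsSig21 D :=
  ⟨u, v, w, span_eq_of_triple hu hv hw h3 (by rw [huu]; norm_num) (by rw [hvv]; norm_num)
    (by rw [hww]; norm_num) huv huw hvw, huu, hvv, hww, huv, huw, hvw⟩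

set_option maxHeartbeats 1000000 in
lemma sig21_isotropics {S : Submodule ℝ V6} (hS : IsSig21 S) {x y : V6}
    (hx : x ∈ S) (hy : y ∈ S) (hxx : B x x = 0) (hyy : B y y = 0) (hxy : B x y = 0)
    (hx0 : x ≠ 0) : ∃ t : ℝ, y = t • x := by
  obtain ⟨u, v, w, rfl, huu, hvv, hww, huv, huw, hvw⟩ := hS
  rw [mem_span_triple] at hx hy
  obtain ⟨a, b, c, rfl⟩ := hx
  obtain ⟨a', b', c', rfl⟩ := hy
  rw [B_triple, huu, hvv, hww, huv, huw, hvw] at hxx hyy hxy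
  have e1 : a^2 + b^2 - c^2 = 0 := by linear_combination hxx
  have e2 : a'^2 + b'^2 - c'^2 = 0 := by linear_combination hyy
  have e3 : a*a' + b*b' - c*c' = 0 := by linear_combination hxy
  have hc : c ≠ 0 := by
    rintro rfl
    have ha : a = 0 := by
      have := sq_nonneg a; have := sq_nonneg b
      have h1 : a^2 = 0 := by linarith
      exact pow_eq_zero_iff two_ne_zero |>.mp h1
    have hb : b = 0 := by
      have := sq_nonneg a; have := sq_nonneg b
      have h1 : b^2 = 0 := by linarith
      exact pow_eq_zero_iff two_ne_zero |>.mp h1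
    exact hx0 (by rw [ha, hb]; simp)
  have key : (c*a' - c'*a)^2 + (c*b' - c'*b)^2 = 0 := by
    linear_combination (c^2) * e2 + (c'^2) * e1 - (2*c*c') * e3
  have ha : c*a' - c'*a = 0 := by
    have h1 : (c*a' - c'*a)^2 = 0 := by
      have := sq_nonneg (c*a' - c'*a); have := sq_nonneg (c*b' - c'*b); linarith
    exact pow_eq_zero_iff two_ne_zero |>.mp h1
  have hb : c*b' - c'*b = 0 := by
    have h1 : (c*b' - c'*b)^2 = 0 := by
      have := sq_nonneg (c*a' - c'*a); have := sq_nonneg (c*b' - c'*b); linarith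
    exact pow_eq_zero_iff two_ne_zero |>.mp h1
  refine ⟨c'/c, ?_⟩
  match_scalars
  · field_simp; linarith
  · field_simp; linarith
  · field_simp

lemma meets (S N : Submodule ℝ V6) (h : 6 < finrank ℝ S + finrank ℝ N) :
    ∃ x : V6, x ∈ S ⊓ N ∧ x ≠ 0 := by
  have hle : finrank ℝ (S ⊔ N : Submodule ℝ V6) ≤ 6 :=
    le_trans (Submodule.finrank_le _) (le_of_eq finrank_V6)
  have heq := Submodule.finrank_sup_add_finrank_inf_eq S N
  have : S ⊓ N ≠ ⊥ := by
    intro hbot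
    rw [hbot, finrank_bot] at heq
    omega
  exact Submodule.exists_mem_ne_zero_of_ne_bot this

def nvec (i : Fin 6) : V6 := Pi.single i 1

lemma B_nvec_self (i : Fin 6) : B (nvec i) (nvec i) ≠ 0 := by
  fin_cases i <;> simp [B, nvec, Pi.single_apply]

lemma B_nvec_ne {i j : Fin 6} (h : i ≠ j) : B (nvec i) (nvec j) = 0 := by
  fin_cases i <;> fin_cases j <;> simp_all [B, nvec, Pi.single_apply]

def pfam (k : Fin 4) : V6 := nvec (Fin.castLE (by norm_num) k)

def nfam (k : Fin 2) : V6 := nvec (⟨(k : ℕ) + 4, by omega⟩ : Fin 6)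

def Ppos : Submodule ℝ V6 := span ℝ (Set.range pfam)

def Nneg : Submodule ℝ V6 := span ℝ (Set.range nfam)

lemma finrank_Ppos : finrank ℝ Ppos = 4 := by
  have hli : LinearIndependent ℝ pfam := by
    apply LinearMap.BilinForm.linearIndependent_of_iIsOrtho (B := Bf)
    · intro i j hij
      exact B_nvec_ne (fun hc => hij (Fin.castLE_injective _ hc))
    · intro i
      exact B_nvec_self _
  rw [Ppos, finrank_span_eq_card hli]
  simp

lemma finrank_Nneg : finrank ℝ Nneg = 2 := by
  have hli : LinearIndependent ℝ nfam := by
    apply LinearMap.BilinForm.linearIndependent_of_iIsOrtho (B := Bf)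
    · intro i j hij
      refine B_nvec_ne (fun hc => hij ?_)
      have h2 : ((i:ℕ) + 4 : ℕ) = (j:ℕ) + 4 := congrArg Fin.val hc
      exact Fin.ext (by omega)
    · intro i
      exact B_nvec_self _
  rw [Nneg, finrank_span_eq_card hli]
  simp

lemma mem_Ppos_coords {x : V6} (hx : x ∈ Ppos) : x 4 = 0 ∧ x 5 = 0 := by
  have key : ∀ i : Fin 6, 3 < (i:ℕ) →
      Ppos ≤ LinearMap.ker (LinearMap.proj (R := ℝ) (φ := fun _ : Fin 6 => ℝ) i) := by
    intro i hi
    rw [Ppos, span_le]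
    rintro y ⟨k, rfl⟩
    simp only [LinearMap.mem_ker, LinearMap.proj_apply, pfam, nvec, SetLike.mem_coe]
    rw [Pi.single_apply, if_neg (by simp only [Fin.ext_iff, Fin.coe_castLE]; omega)]
  exact ⟨key 4 (by decide) hx, key 5 (by decide) hx⟩

lemma mem_Nneg_coords {x : V6} (hx : x ∈ Nneg) :
    x 0 = 0 ∧ x 1 = 0 ∧ x 2 = 0 ∧ x 3 = 0 := by
  have key : ∀ i : Fin 6, (i:ℕ) ≤ 3 →
      Nneg ≤ LinearMap.ker (LinearMap.proj (R := ℝ) (φ := fun _ : Fin 6 => ℝ) i) := by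
    intro i hi
    rw [Nneg, span_le]
    rintro y ⟨k, rfl⟩
    simp only [LinearMap.mem_ker, LinearMap.proj_apply, nfam, nvec, SetLike.mem_coe]
    rw [Pi.single_apply, if_neg (by simp only [Fin.ext_iff]; omega)]
  exact ⟨key 0 (by decide) hx, key 1 (by decide) hx, key 2 (by decide) hx,
    key 3 (by decide) hx⟩

lemma B_nonneg_of_mem_Ppos {x : V6} (hx : x ∈ Ppos) : 0 ≤ B x x := by
  obtain ⟨h4, h5⟩ := mem_Ppos_coords hx
  unfold B
  rw [h4, h5]
  nlinarith [mul_self_nonneg (x 0), mul_self_nonneg (x 1), mul_self_nonneg (x 2),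
    mul_self_nonneg (x 3)]

lemma B_nonpos_of_mem_Nneg {x : V6} (hx : x ∈ Nneg) : B x x ≤ 0 := by
  obtain ⟨h0, h1, h2, h3⟩ := mem_Nneg_coords hx
  unfold B
  rw [h0, h1, h2, h3]
  nlinarith [mul_self_nonneg (x 4), mul_self_nonneg (x 5)]

lemma B_neg_of_mem_Nneg {x : V6} (hx : x ∈ Nneg) (hx0 : x ≠ 0) : B x x < 0 := by
  obtain ⟨h0, h1, h2, h3⟩ := mem_Nneg_coords hx
  have h45 : x 4 ≠ 0 ∨ x 5 ≠ 0 := by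
    by_contra hc
    push_neg at hc
    apply hx0
    funext i
    fin_cases i <;> simp [h0, h1, h2, h3, hc.1, hc.2]
  unfold B
  rw [h0, h1, h2, h3]
  rcases h45 with h | h <;>
    nlinarith [mul_self_nonneg (x 4), mul_self_nonneg (x 5), mul_self_pos.mpr h]

lemma B_add_left (x y z : V6) : B (x + y) z = B x z + B y z := by
  simp only [B, Pi.add_apply]; ring

lemma B_add_add (x y : V6) : B (x + y) (x + y) = B x x + B x y + B y x + B y y := by
  simp only [B, Pi.add_apply]; ring

lemma B_smul_smul (t t' : ℝ) (x y : V6) : B (t • x) (t' • y) = t * t' * B x y := by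
  simp only [B, Pi.smul_apply, smul_eq_mul]; ring

set_option maxHeartbeats 2000000 in
lemma perp_sig21 {W : Submodule ℝ V6} (hW : IsSig21 W) : IsSig21 (perpB W) := by
  obtain ⟨u, v, w, hWeq, huu, hvv, hww, huv, huw, hvw⟩ := hW
  have hW3 : finrank ℝ W = 3 :=
    sig21_finrank ⟨u, v, w, hWeq, huu, hvv, hww, huv, huw, hvw⟩
  set D := perpB W with hD
  have hD3 : finrank ℝ D = 3 := by rw [hD, finrank_perpB, hW3]
  have huW : u ∈ W := hWeq ▸ subset_span (by simp)
  have hvW : v ∈ W := hWeq ▸ subset_span (by simp)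
  have hwW : w ∈ W := hWeq ▸ subset_span (by simp)
  have hDW : ∀ x ∈ D, ∀ y ∈ W, B x y = 0 := fun x hx => mem_perpB.mp hx
  have hvu : B v u = 0 := (B_comm v u).trans huv
  have hwu : B w u = 0 := (B_comm w u).trans huw
  have hwv : B w v = 0 := (B_comm w v).trans hvw
  have hWD_bot : W ⊓ D = ⊥ := by
    rw [eq_bot_iff]
    rintro x ⟨hxW, hxD⟩
    have h := mem_perpB.mp hxD
    simp only [SetLike.mem_coe] at hxW hxD
    rw [hWeq, mem_span_triple] at hxW
    obtain ⟨a, b, c, rfl⟩ := hxW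
    have h1 := h u huW; have h2 := h v hvW; have h3 := h w hwW
    rw [B_triple_right, huu, hvu, hwu] at h1
    rw [B_triple_right, huv, hvv, hwv] at h2
    rw [B_triple_right, huw, hvw, hww] at h3
    have ha : a = 0 := by linarith
    have hb : b = 0 := by linarith
    have hc : c = 0 := by linarith
    rw [ha, hb, hc]
    simp
  have hsup : W ⊔ D = ⊤ := by
    apply Submodule.eq_top_of_finrank_eq
    have hh := Submodule.finrank_sup_add_finrank_inf_eq W D
    rw [hWD_bot, finrank_bot] at hh
    rw [finrank_V6]
    omega
  have hdisj : Disjoint D (Bf.orthogonal D) := by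
    rw [disjoint_iff, eq_bot_iff]
    rintro x ⟨hxD, hxO⟩
    have hxall : ∀ y : V6, B x y = 0 := by
      intro y
      have hy : y ∈ W ⊔ D := by rw [hsup]; trivial
      rw [Submodule.mem_sup] at hy
      obtain ⟨yw, hyw, yd, hyd, rfl⟩ := hy
      have h1 : B x yw = 0 := hDW x hxD yw hyw
      have h2 : B x yd = 0 := (B_comm x yd).trans (hxO yd hyd)
      calc B x (yw + yd) = B (yw + yd) x := B_comm _ _
        _ = B yw x + B yd x := B_add_left _ _ _
        _ = B x yw + B x yd := by rw [B_comm yw x, B_comm yd x]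
        _ = 0 := by rw [h1, h2]; ring
    have hx0 : x = 0 := Bf_nondeg.1 x hxall
    simp [hx0]
  have hres : (Bf.restrict D).Nondegenerate :=
    Bf.nondegenerate_restrict_of_disjoint_orthogonal Bf_refl hdisj
  have hsym : (Bf.restrict D).IsSymm := by
    refine ⟨fun x y => ?_⟩
    simp only [LinearMap.BilinForm.restrict_apply, RingHom.id_apply, Bf_apply]
    exact B_comm _ _
  obtain ⟨bD, hbD⟩ := LinearMap.BilinForm.exists_orthogonal_basis (LinearMap.BilinForm.isSymm_iff.mp hsym)
  set κ : Fin 3 → Fin (finrank ℝ D) := fun i => Fin.cast hD3.symm i with hκ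
  set e : Fin 3 → V6 := fun i => (bD (κ i) : V6) with he
  have heD : ∀ i, e i ∈ D := fun i => (bD (κ i)).2
  have horth : ∀ i j, i ≠ j → B (e i) (e j) = 0 := by
    intro i j hij
    have hne : κ i ≠ κ j := by
      intro hc
      exact hij (Fin.ext (by simpa [hκ] using congrArg Fin.val hc))
    have h := hbD hne
    simpa only [Function.onFun, LinearMap.BilinForm.restrict_apply, LinearMap.domRestrict_apply, Bf_apply] using h
  have hdiag : ∀ i, B (e i) (e i) ≠ 0 := by
    intro i h0
    have hzero : (Bf.restrict D) (bD (κ i)) = 0 := by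
      apply bD.ext
      intro j
      by_cases hj : κ i = j
      · subst hj
        simpa only [LinearMap.BilinForm.restrict_apply, LinearMap.domRestrict_apply, Bf_apply, LinearMap.zero_apply] using h0
      · simpa only [LinearMap.zero_apply] using hbD hj
    have hb0 : bD (κ i) = 0 := hres.1 _ (fun y => by rw [hzero]; rfl)
    exact bD.ne_zero (κ i) hb0
  set e' : Fin 3 → V6 := fun i => (Real.sqrt |B (e i) (e i)|)⁻¹ • e i with he'
  have he'D : ∀ i, e' i ∈ D := fun i => smul_mem _ _ (heD i)
  have hval : ∀ i, B (e' i) (e' i) = 1 ∨ B (e' i) (e' i) = -1 := by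
    intro i
    have habs : (0:ℝ) < |B (e i) (e i)| := abs_pos.mpr (hdiag i)
    have hsq : Real.sqrt |B (e i) (e i)| * Real.sqrt |B (e i) (e i)| = |B (e i) (e i)| :=
      Real.mul_self_sqrt (abs_nonneg _)
    have hcalc : B (e' i) (e' i) = B (e i) (e i) / |B (e i) (e i)| := by
      show B ((Real.sqrt |B (e i) (e i)|)⁻¹ • e i) ((Real.sqrt |B (e i) (e i)|)⁻¹ • e i) = _
      rw [B_smul_smul, ← mul_inv, hsq]
      ring
    rcases lt_or_gt_of_ne (hdiag i) with hlt | hgt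
    · right
      rw [hcalc, abs_of_neg hlt, div_neg, div_self (hdiag i)]
    · left
      rw [hcalc, abs_of_pos hgt, div_self (hdiag i)]
  have horth' : ∀ i j, i ≠ j → B (e' i) (e' j) = 0 := by
    intro i j hij
    show B ((Real.sqrt |B (e i) (e i)|)⁻¹ • e i) ((Real.sqrt |B (e j) (e j)|)⁻¹ • e j) = 0
    rw [B_smul_smul, horth i j hij, mul_zero]
  have hBw : ∀ x ∈ D, B x w = 0 := fun x hx => hDW x hx w hwW
  -- contradiction helper: two orthogonal (-1)-vectors in D
  have neg2 : ∀ x y : V6, x ∈ D → y ∈ D → B x x = -1 → B y y = -1 → B x y = 0 → False := by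
    intro x y hx hy hxx hyy hxy
    have hxw : B x w = 0 := hBw x hx
    have hyw : B y w = 0 := hBw y hy
    have hT : finrank ℝ (span ℝ ({x, y, w} : Set V6)) = 3 :=
      finrank_span_triple (by rw [hxx]; norm_num) (by rw [hyy]; norm_num)
        (by rw [hww]; norm_num) hxy hxw hyw
    obtain ⟨z, ⟨hz1, hz2⟩, hz0⟩ := meets _ Ppos (by rw [hT, finrank_Ppos]; norm_num)
    have h1 : 0 ≤ B z z := B_nonneg_of_mem_Ppos hz2
    simp only [SetLike.mem_coe] at hz1
    rw [_root_.mem_span_triple] at hz1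
    obtain ⟨p, q, r, rfl⟩ := hz1
    rw [B_triple, hxx, hyy, hww, hxy, hxw, hyw] at h1
    have hp : p * p = 0 :=
      le_antisymm (by nlinarith [mul_self_nonneg q, mul_self_nonneg r]) (mul_self_nonneg p)
    have hq : q * q = 0 :=
      le_antisymm (by nlinarith [mul_self_nonneg p, mul_self_nonneg r]) (mul_self_nonneg q)
    have hr : r * r = 0 :=
      le_antisymm (by nlinarith [mul_self_nonneg p, mul_self_nonneg q]) (mul_self_nonneg r)
    apply hz0
    rw [mul_self_eq_zero.mp hp, mul_self_eq_zero.mp hq, mul_self_eq_zero.mp hr]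
    simp
  -- contradiction helper: D positive definite
  have pos3 : B (e' 0) (e' 0) = 1 → B (e' 1) (e' 1) = 1 → B (e' 2) (e' 2) = 1 → False := by
    intro h0 h1 h2
    have hDspan : D = span ℝ ({e' 0, e' 1, e' 2} : Set V6) :=
      span_eq_of_triple (he'D 0) (he'D 1) (he'D 2) hD3 (by rw [h0]; norm_num)
        (by rw [h1]; norm_num) (by rw [h2]; norm_num) (horth' 0 1 (by decide))
        (horth' 0 2 (by decide)) (horth' 1 2 (by decide))
    have hw0 : w ≠ 0 := by
      intro hc
      rw [hc] at hww
      simp [B] at hww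
    have hrank : finrank ℝ (perpB (span ℝ ({w} : Set V6))) = 5 := by
      rw [finrank_perpB, finrank_span_singleton hw0]
    obtain ⟨z, ⟨hz1, hz2⟩, hz0⟩ := meets _ Nneg (by rw [hrank, finrank_Nneg]; norm_num)
    have hneg : B z z < 0 := B_neg_of_mem_Nneg hz2 hz0
    have hzT : z ∈ W ⊔ D := by rw [hsup]; trivial
    rw [Submodule.mem_sup] at hzT
    obtain ⟨zw, hzw, zd, hzd, rfl⟩ := hzT
    have hzww : B (zw + zd) w = 0 := mem_perpB.mp hz1 w (subset_span (by simp))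
    rw [hWeq, _root_.mem_span_triple] at hzw
    obtain ⟨a, b, c, rfl⟩ := hzw
    rw [hDspan, _root_.mem_span_triple] at hzd
    obtain ⟨p, q, r, rfl⟩ := hzd
    have he0w : B (e' 0) w = 0 := hBw _ (hDspan ▸ he'D 0)
    have he1w : B (e' 1) w = 0 := hBw _ (hDspan ▸ he'D 1)
    have he2w : B (e' 2) w = 0 := hBw _ (hDspan ▸ he'D 2)
    rw [B_add_left, B_triple_right, B_triple_right, huw, hvw, hww, he0w, he1w, he2w] at hzww
    have hc0 : c = 0 := by linarith
    have hcross : B (a•u+b•v+c•w) (p•e' 0+q•e' 1+r•e' 2) = 0 := by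
      rw [B_comm]
      exact hDW _ (hDspan ▸ (_root_.mem_span_triple.mpr ⟨p, q, r, rfl⟩))
        _ (hWeq ▸ _root_.mem_span_triple.mpr ⟨a, b, c, rfl⟩)
    have hcross' : B (p•e' 0+q•e' 1+r•e' 2) (a•u+b•v+c•w) = 0 := by
      rw [B_comm]; exact hcross
    rw [B_add_add, hcross, hcross'] at hneg
    rw [B_triple, huu, hvv, hww, huv, huw, hvw] at hneg
    rw [B_triple, h0, h1, h2, horth' 0 1 (by decide), horth' 0 2 (by decide),
      horth' 1 2 (by decide)] at hneg
    rw [hc0] at hneg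
    nlinarith [mul_self_nonneg a, mul_self_nonneg b, mul_self_nonneg p, mul_self_nonneg q,
      mul_self_nonneg r]
  -- case analysis on the signs
  rcases hval 0 with h0 | h0 <;> rcases hval 1 with h1 | h1 <;> rcases hval 2 with h2 | h2
  · exact absurd (pos3 h0 h1 h2) id
  · exact isSig21_of_triple (he'D 0) (he'D 1) (he'D 2) hD3 h0 h1 h2
      (horth' 0 1 (by decide)) (horth' 0 2 (by decide)) (horth' 1 2 (by decide))
  · exact isSig21_of_triple (he'D 0) (he'D 2) (he'D 1) hD3 h0 h2 h1
      (horth' 0 2 (by decide)) (horth' 0 1 (by decide)) (horth' 2 1 (by decide))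
  · exact absurd (neg2 _ _ (he'D 1) (he'D 2) h1 h2 (horth' 1 2 (by decide))) id
  · exact isSig21_of_triple (he'D 1) (he'D 2) (he'D 0) hD3 h1 h2 h0
      (horth' 1 2 (by decide)) (horth' 1 0 (by decide)) (horth' 2 0 (by decide))
  · exact absurd (neg2 _ _ (he'D 0) (he'D 2) h0 h2 (horth' 0 2 (by decide))) id
  · exact absurd (neg2 _ _ (he'D 0) (he'D 1) h0 h1 (horth' 0 1 (by decide))) id
  · exact absurd (neg2 _ _ (he'D 0) (he'D 1) h0 h1 (horth' 0 1 (by decide))) id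

lemma rank1_eq_span {S : Submodule ℝ V6} (h1 : finrank ℝ S = 1) {x : V6}
    (hx : x ∈ S) (hx0 : x ≠ 0) : S = span ℝ {x} := by
  refine (Submodule.eq_of_le_of_finrank_eq ?_ ?_).symm
  · rwa [Submodule.span_singleton_le_iff_mem]
  · rw [finrank_span_singleton hx0, h1]

lemma exists_ne_zero_of_finrank_one {S : Submodule ℝ V6} (h1 : finrank ℝ S = 1) :
    ∃ x : V6, x ∈ S ∧ x ≠ 0 := by
  apply Submodule.exists_mem_ne_zero_of_ne_bot
  intro hb
  rw [hb, finrank_bot] at h1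
  omega

end Aux

/-- A discrete Legendre map (whose vertical curvature spheres span
3-dimensional subspaces along each `+`-coordinate ribbon) is a discrete channel surface with
circular direction `+` if and only if the horizontal curvature spheres are constant along each
`+`-coordinate line and the vertical curvature spheres along each `+`-coordinate ribbon
determine a `(2,1)`-plane. -/
theorem channel_surface_iff_curvature_sphere_data
    (f : ℤ × ℤ → Submodule ℝ V6) (hf : IsLegendre f)
    (hdim : ∀ n : ℤ, Module.finrank ℝ ↥(⨆ m : ℤ, sMinus f m n) = 3) :
    IsChannelPlus f ↔
      ((∀ m m' n : ℤ, sPlus f m n = sPlus f m' n) ∧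
        ∀ n : ℤ, IsSig21 (⨆ m : ℤ, sMinus f m n)) := by
  obtain ⟨hcontact, hplus, hminus⟩ := hf
  constructor
  · rintro ⟨hf', D, E, hcong, hDE⟩
    constructor
    · -- horizontal curvature spheres constant
      have hstep : ∀ m n : ℤ, sPlus f (m + 1) n = sPlus f m n := by
        intro m n
        obtain ⟨x, hx, hx0⟩ := exists_ne_zero_of_finrank_one (hplus m n)
        obtain ⟨y, hy, hy0⟩ := exists_ne_zero_of_finrank_one (hplus (m + 1) n)
        have hxf : x ∈ f (m + 1, n) := (Submodule.mem_inf.mp hx).2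
        have hyf : y ∈ f (m + 1, n) := (Submodule.mem_inf.mp hy).1
        have hiso := hcontact (m + 1, n)
        have hxx : B x x = 0 := hiso.2 x hxf x hxf
        have hyy : B y y = 0 := hiso.2 y hyf y hyf
        have hxy : B x y = 0 := hiso.2 x hxf y hyf
        have hxD : x ∈ D (m, n) := (hcong m n).2.1 hx
        have hyD : y ∈ D (m, n) := by
          have h := (hcong (m + 1) n).2.1 hy
          rwa [(hDE (m + 1) m n).1] at h
        obtain ⟨t, rfl⟩ := sig21_isotropics (hcong m n).1.1 hxD hyD hxx hyy hxy hx0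
        have hspan : sPlus f (m + 1) n = Submodule.span ℝ {t • x} :=
          rank1_eq_span (hplus (m + 1) n) hy hy0
        apply Submodule.eq_of_le_of_finrank_eq
        · rw [hspan, Submodule.span_singleton_le_iff_mem]
          exact Submodule.smul_mem _ _ hx
        · rw [hplus, hplus]
      intro m m' n
      suffices h : ∀ k : ℤ, sPlus f k n = sPlus f 0 n by rw [h m, h m']
      intro k
      induction k using Int.induction_on with
      | zero => rfl
      | succ i ih => rw [hstep i n, ih]
      | pred i ih =>
        have h2 := hstep (-(i + 1 : ℤ)) n
        rw [show (-(i + 1 : ℤ) + 1) = -(i : ℤ) by ring] at h2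
        rw [show (-(i : ℤ) - 1) = -(i + 1 : ℤ) by ring, ← h2, ih]
    · -- vertical ribbons are (2,1)-planes
      intro n
      have hle : (⨆ m, sMinus f m n) ≤ E (0, n) := by
        apply iSup_le
        intro m
        have h := (hcong m n).2.2.2.1
        rwa [(hDE m 0 n).2] at h
      have hE : IsSig21 (E (0, n)) := (hcong 0 n).1.2.1
      have heq : (⨆ m, sMinus f m n) = E (0, n) :=
        Submodule.eq_of_le_of_finrank_eq hle (by rw [hdim n, sig21_finrank hE])
      rw [heq]
      exact hE
  · rintro ⟨ha, hb⟩
    refine ⟨⟨hcontact, hplus, hminus⟩,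
      fun p => perpB (⨆ m, sMinus f m p.2), fun p => (⨆ m, sMinus f m p.2),
      ?_, fun m m' n => ⟨rfl, rfl⟩⟩
    intro m n
    have hSig := hb n
    have hperp := perp_sig21 hSig
    refine ⟨⟨hperp, hSig, ?_⟩, ?_, ?_, ?_, ?_⟩
    · intro x
      constructor
      · intro hx y hy
        exact (B_comm x y).trans (mem_perpB.mp hy x hx)
      · intro hx
        have h2 : x ∈ perpB (perpB (⨆ m, sMinus f m n)) := mem_perpB.mpr hx
        rwa [perpB_perpB] at h2
    · intro x hx
      apply mem_perpB.mpr
      suffices hs : (⨆ m', sMinus f m' n) ≤ pPerp x by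
        intro y hy
        exact (B_comm x y).trans (hs hy)
      apply iSup_le
      intro m' y hy
      have hxf : x ∈ f (m', n) := by
        have h2 : x ∈ sPlus f m' n := ha m m' n ▸ hx
        exact (Submodule.mem_inf.mp h2).1
      show B y x = 0
      exact (hcontact (m', n)).2 y (Submodule.mem_inf.mp hy).1 x hxf
    · intro x hx
      apply mem_perpB.mpr
      suffices hs : (⨆ m', sMinus f m' n) ≤ pPerp x by
        intro y hy
        exact (B_comm x y).trans (hs hy)
      apply iSup_le
      intro m' y hy
      have hxf : x ∈ f (m', n + 1) := by
        have h2 : x ∈ sPlus f m' (n + 1) := ha m m' (n + 1) ▸ hx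
        exact (Submodule.mem_inf.mp h2).1
      show B y x = 0
      exact (hcontact (m', n + 1)).2 y (Submodule.mem_inf.mp hy).2 x hxf
    · exact le_iSup (fun m' => sMinus f m' n) m
    · exact le_iSup (fun m' => sMinus f m' n) (m + 1)
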